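/- Let N be a group, Z a normal subgroup of N of finite index, and V a real vector space equipped with a linear representation ρ of N such that ρ(z) is the identity for every z ∈ Z. Let f : Z → V satisfy f(z₁z₂) = f(z₁) + f(z₂) for all z₁, z₂ ∈ Z and the equivariance f(n z n⁻¹) = ρ(n)(f(z)) for all n ∈ N, z ∈ Z. Then there exists a function F : N → V such that F(z) = f(z) for all z ∈ Z and F(mn) = F(m) + ρ(m)(F(n)) for all m, n ∈ N; that is, the translation homomorphism f of Z extends to an affine action of N on V whose linear part is ρ. -/

import Mathlib

/-- Let `Z` be a normal finite-index subgroup of `N`, and `ρ` a real linear representation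
of `N` which is trivial on `Z`. Any homomorphism `f` from `Z` to the additive group `V`
which is equivariant for conjugation extends to a 1-cocycle `F : N → V` for `ρ`, i.e. the
translation action of `Z` extends to an affine action of `N` with linear part `ρ`. -/
theorem stmt13 (N : Type*) [Group N] (Z : Subgroup N) [Z.Normal] [Z.FiniteIndex]
    (V : Type*) [AddCommGroup V] [Module ℝ V]
    (ρ : Representation ℝ N V)
    (hρZ : ∀ z ∈ Z, ρ z = LinearMap.id)
    (f : N → V)
    (hfadd : ∀ z₁ ∈ Z, ∀ z₂ ∈ Z, f (z₁ * z₂) = f z₁ + f z₂)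
    (hfequiv : ∀ (n : N), ∀ z ∈ Z, f (n * z * n⁻¹) = ρ n (f z)) :
    ∃ F : N → V, (∀ z ∈ Z, F z = f z) ∧
      ∀ m n : N, F (m * n) = F m + ρ m (F n) := by
  classical
  haveI : Finite (N ⧸ Z) := Subgroup.finite_quotient_of_finiteIndex (H := Z)
  haveI : Fintype (N ⧸ Z) := Fintype.ofFinite _
  -- basic facts about ρ
  have hρ1 : ∀ (m n : N) (v : V), ρ m (ρ n v) = ρ (m * n) v := by
    intro m n v; rw [map_mul]; rfl
  have hρz : ∀ z ∈ Z, ∀ v : V, ρ z v = v := by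
    intro z hz v; rw [hρZ z hz]; rfl
  -- section of the quotient map
  set σ : N ⧸ Z → N := Quotient.out with hσdef
  have hσeq : ∀ q : N ⧸ Z, ((σ q : N) : N ⧸ Z) = q := fun q => Quotient.out_eq q
  have hmem : ∀ n : N, n * (σ ((n : N ⧸ Z)))⁻¹ ∈ Z := by
    intro n
    have h1 : ((n : N ⧸ Z)) = ((σ ((n : N ⧸ Z)) : N) : N ⧸ Z) := (hσeq _).symm
    rw [QuotientGroup.eq] at h1
    have h2 := Subgroup.Normal.conj_mem ‹Z.Normal› _ (Z.inv_mem h1) n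
    simpa [mul_assoc] using h2
  -- the crude extension g
  set g : N → V := fun n => f (n * (σ ((n : N ⧸ Z)))⁻¹) with hgdef
  have hmk : ∀ z ∈ Z, ∀ n : N, (((z * n : N)) : N ⧸ Z) = (n : N ⧸ Z) := by
    intro z hz n
    have : ((z : N) : N ⧸ Z) = 1 := (QuotientGroup.eq_one_iff z).mpr hz
    rw [QuotientGroup.mk_mul, this, one_mul]
  have hgz : ∀ z ∈ Z, ∀ n : N, g (z * n) = f z + g n := by
    intro z hz n
    simp only [hgdef]
    rw [hmk z hz n, mul_assoc]
    exact hfadd z hz _ (hmem n)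
  have hgnz : ∀ n : N, ∀ z ∈ Z, g (n * z) = ρ n (f z) + g n := by
    intro n z hz
    have h1 : n * z = (n * z * n⁻¹) * n := by group
    rw [h1, hgz _ (Subgroup.Normal.conj_mem ‹Z.Normal› _ hz n) n, hfequiv n z hz]
  -- the defect 2-cocycle
  set d : N → N → V := fun m n => g (m * n) - g m - ρ m (g n) with hddef
  have hd2 : ∀ (m n₁ n₂ : N), ((n₁ : N ⧸ Z)) = ((n₂ : N ⧸ Z)) → d m n₁ = d m n₂ := by
    intro m n₁ n₂ h
    rw [QuotientGroup.eq] at h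
    have hn₂ : n₂ = n₁ * (n₁⁻¹ * n₂) := by group
    simp only [hddef]
    rw [hn₂, ← mul_assoc, hgnz _ _ h, hgnz _ _ h, map_add, hρ1]
    abel
  have hcoc : ∀ m n p : N, d m n = ρ m (d n p) - d (m * n) p + d m (n * p) := by
    intro m n p
    simp only [hddef, map_sub, hρ1, ← mul_assoc]
    abel
  -- averaging
  set S : N → V := fun m => ∑ q : N ⧸ Z, d m (σ q) with hSdef
  have hcard : (Nat.card (N ⧸ Z) : ℝ) ≠ 0 := by
    exact_mod_cast Subgroup.FiniteIndex.index_ne_zero (H := Z)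
  have hSum : ∀ m n : N, ∑ q : N ⧸ Z, d m (n * σ q) = S m := by
    intro m n
    have h1 : ∀ q : N ⧸ Z, d m (n * σ q) = d m (σ ((n : N ⧸ Z) * q)) := by
      intro q
      refine hd2 m _ _ ?_
      rw [QuotientGroup.mk_mul, hσeq, hσeq]
    calc ∑ q : N ⧸ Z, d m (n * σ q) = ∑ q : N ⧸ Z, d m (σ ((n : N ⧸ Z) * q)) := by
          exact Finset.sum_congr rfl fun q _ => h1 q
      _ = ∑ q : N ⧸ Z, d m (σ q) :=
          Fintype.sum_equiv (Equiv.mulLeft ((n : N ⧸ Z))) _ _ (fun q => rfl)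
  have hSid : ∀ m n : N, (Nat.card (N ⧸ Z) : ℝ) • d m n = ρ m (S n) - S (m * n) + S m := by
    intro m n
    have h1 : ∑ q : N ⧸ Z, d m n
        = ∑ q : N ⧸ Z, (ρ m (d n (σ q)) - d (m * n) (σ q) + d m (n * σ q)) :=
      Finset.sum_congr rfl fun q _ => hcoc m n (σ q)
    rw [Finset.sum_const, Finset.sum_add_distrib, Finset.sum_sub_distrib, ← map_sum,
      hSum m n] at h1
    have h2 : (Finset.univ : Finset (N ⧸ Z)).card • d m n = (Nat.card (N ⧸ Z) : ℝ) • d m n := by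
      rw [Finset.card_univ, ← Nat.card_eq_fintype_card, ← Nat.cast_smul_eq_nsmul ℝ]
    rw [h2] at h1
    rw [h1, hSdef]
  set h : N → V := fun m => (Nat.card (N ⧸ Z) : ℝ)⁻¹ • S m with hhdef
  have hdh : ∀ m n : N, d m n = h m + ρ m (h n) - h (m * n) := by
    intro m n
    simp only [hhdef, map_smul, ← smul_sub, ← smul_add]
    rw [show S m + (ρ m) (S n) - S (m * n) = ρ m (S n) - S (m * n) + S m by abel,
      ← hSid m n, smul_smul, inv_mul_cancel₀ hcard, one_smul]
  refine ⟨fun n => g n + h n, ?_, ?_⟩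
  · intro z hz
    show g z + h z = f z
    have hdz : ∀ p : N, d z p = f z - g z := by
      intro p
      simp only [hddef]
      rw [hgz z hz p, hρz z hz]
      abel
    have hSz : S z = (Nat.card (N ⧸ Z) : ℝ) • (f z - g z) := by
      rw [hSdef]
      simp only [hdz]
      rw [Finset.sum_const, Finset.card_univ, ← Nat.card_eq_fintype_card,
        ← Nat.cast_smul_eq_nsmul ℝ]
    have : h z = f z - g z := by
      rw [hhdef]; simp only; rw [hSz, smul_smul, inv_mul_cancel₀ hcard, one_smul]
    rw [this]; abel
  · intro m n
    show g (m * n) + h (m * n) = g m + h m + ρ m (g n + h n)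
    have h1 : g (m * n) = d m n + g m + ρ m (g n) := by simp only [hddef]; abel
    rw [h1, hdh m n, map_add]
    abel
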